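/- arXiv:1611.07458 — 3 statements merged into one kernel-verified Lean document; each statement's English description precedes it below -/
import Mathlib

section
/- Let s be odd and k = GF(2^s) with trace map Tr : k → GF(2). Suppose θ, β ∈ k satisfy θ^2 + θ = β/(β^2 + β + 1). Then Tr(θ/(θ^2 + θ + 1)) ≠ Tr((θ+1)/(θ^2 + θ + 1)). -/
lemma aux_ne_zero (s : ℕ) (hs : 0 < s) (hodd : Odd s) (x : GaloisField 2 s) :
    x ^ 2 + x + 1 ≠ 0 := by
  intro h0
  have h2 : (2 : GaloisField 2 s) = 0 := by
    have := CharP.cast_eq_zero (GaloisField 2 s) 2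
    simpa using this
  have hx2 : x ^ 2 = x + 1 := by linear_combination h0 - h2 - x * h2
  have hx4 : x ^ 4 = x := by
    have h : x ^ 4 = (x ^ 2) ^ 2 := by ring
    rw [h, hx2]
    linear_combination x * h2 + hx2 + h2
  have hpow4 : ∀ m : ℕ, x ^ (4 : ℕ) ^ m = x := by
    intro m
    induction m with
    | zero => simp
    | succ n ih => rw [pow_succ, pow_mul, ih, hx4]
  obtain ⟨m, hm⟩ := hodd
  haveI : Fintype (GaloisField 2 s) := Fintype.ofFinite _
  have hcard : x ^ (2 ^ s) = x := by
    have := FiniteField.pow_card x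
    rwa [← Nat.card_eq_fintype_card, GaloisField.card 2 s hs.ne'] at this
  have key : x ^ (2 ^ s) = x + 1 := by
    have h1 : (2 : ℕ) ^ s = 4 ^ m * 2 := by
      rw [hm, pow_add, pow_mul, pow_one]; norm_num
    rw [h1, pow_mul, hpow4 m, pow_two]
    linear_combination hx2 - pow_two x
  rw [hcard] at key
  simp at key
lemma aux_trace_sq (s : ℕ) (x : GaloisField 2 s) :
    Algebra.trace (ZMod 2) (GaloisField 2 s) (x ^ 2) =
      Algebra.trace (ZMod 2) (GaloisField 2 s) x := by
  let e : GaloisField 2 s ≃ₐ[ZMod 2] GaloisField 2 s :=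
    AlgEquiv.ofRingEquiv (f := frobeniusEquiv (GaloisField 2 s) 2)
      (fun c => by
        show frobenius (GaloisField 2 s) 2 _ = _
        rw [frobenius_def, ← map_pow, ZMod.pow_card])
  have := Algebra.trace_eq_of_algEquiv e x
  rwa [show e x = x ^ 2 from rfl] at this

lemma aux_trace_one (s : ℕ) (hs : 0 < s) (hodd : Odd s) :
    Algebra.trace (ZMod 2) (GaloisField 2 s) 1 = 1 := by
  have h := Algebra.trace_algebraMap (S := GaloisField 2 s) (1 : ZMod 2)
  rw [map_one] at h
  rw [h, GaloisField.finrank 2 hs.ne', nsmul_eq_mul, mul_one]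
  rw [← Nat.cast_one (R := ZMod 2), ZMod.natCast_eq_iff]
  obtain ⟨m, hm⟩ := hodd
  refine ⟨m, ?_⟩
  have : ((1:ℕ) : ZMod 2).val = 1 := rfl
  rw [this, hm]; ring


/-- Lemma 4.1: for `s` odd and `θ, β ∈ GF(2^s)` with `θ^2 + θ = β/(β^2+β+1)`,
the traces of `θ/(θ^2+θ+1)` and `(θ+1)/(θ^2+θ+1)` differ. -/
theorem stmt_2 (s : ℕ) (hs : 0 < s) (hodd : Odd s) (θ β : GaloisField 2 s)
    (h : θ ^ 2 + θ = β / (β ^ 2 + β + 1)) :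
    Algebra.trace (ZMod 2) (GaloisField 2 s) (θ / (θ ^ 2 + θ + 1)) ≠
      Algebra.trace (ZMod 2) (GaloisField 2 s) ((θ + 1) / (θ ^ 2 + θ + 1)) := by
  have h2 : (2 : GaloisField 2 s) = 0 := by
    have := CharP.cast_eq_zero (GaloisField 2 s) 2
    simpa using this
  have hβ : β ^ 2 + β + 1 ≠ 0 := aux_ne_zero s hs hodd β
  have hD : θ ^ 2 + θ + 1 ≠ 0 := aux_ne_zero s hs hodd θ
  have h' : (θ ^ 2 + θ) * (β ^ 2 + β + 1) = β := by
    rw [eq_div_iff hβ] at h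
    linear_combination h
  have hc : β + 1 ≠ 0 := by
    intro hc0
    have hβ1 : β = 1 := by linear_combination hc0 - h2
    rw [hβ1] at h'
    exact hD (by linear_combination h' + (1 - θ - θ ^ 2) * h2)
  have key : (θ ^ 2 + θ + 1) * ((β + 1) ^ 2 + (β + 1) + 1) = (β + 1) ^ 2 := by
    linear_combination h' + ((θ ^ 2 + θ) * (β + 1) + β + 1) * h2
  have hmul : (θ ^ 2 + θ + 1) * (1 + (β + 1)⁻¹ + ((β + 1)⁻¹) ^ 2) = 1 := by
    have hu : (β + 1) * (β + 1)⁻¹ = 1 := mul_inv_cancel₀ hc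
    linear_combination ((β + 1)⁻¹) ^ 2 * key + ((β + 1) * (β + 1)⁻¹ + 1 - (θ ^ 2 + θ + 1) * ((β + 1) * (β + 1)⁻¹ + 1 + (β + 1)⁻¹)) * hu
  have hinv : (θ ^ 2 + θ + 1)⁻¹ = 1 + (β + 1)⁻¹ + ((β + 1)⁻¹) ^ 2 :=
    inv_eq_of_mul_eq_one_right hmul
  intro heq
  have hsum : Algebra.trace (ZMod 2) (GaloisField 2 s) (θ / (θ ^ 2 + θ + 1))
      + Algebra.trace (ZMod 2) (GaloisField 2 s) ((θ + 1) / (θ ^ 2 + θ + 1)) = 0 := by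
    rw [heq, ← two_mul, show ((2 : ZMod 2)) = 0 by decide, zero_mul]
  rw [← map_add, ← add_div] at hsum
  have hone : θ + (θ + 1) = 1 := by linear_combination θ * h2
  rw [hone, one_div, hinv, map_add, map_add, aux_trace_one s hs hodd, aux_trace_sq] at hsum
  rw [add_assoc, CharTwo.add_self_eq_zero, add_zero] at hsum
  exact one_ne_zero hsum
end

section
/- Let s be odd and k = GF(2^s). If θ ∈ k is a root of T^2 + T + β/(β^2+β+1) for some β ∈ k, then exactly one of the two polynomials T^2 + T + θ/(θ^2+θ+1) and T^2 + T + (θ+1)/(θ^2+θ+1) has a root in k. -/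
-- no root of x^2+x+1 in GF(2^s), s odd
private lemma no_cube_root (s : ℕ) (hs : 0 < s) (hodd : Odd s) (x : GaloisField 2 s)
    (hx : x ^ 2 + x + 1 = 0) : False := by
  letI : Fintype (GaloisField 2 s) := Fintype.ofFinite _
  have h2 : (2 : GaloisField 2 s) = 0 := by
    have := CharP.cast_eq_zero (GaloisField 2 s) 2
    exact_mod_cast this
  have hx0 : x ≠ 0 := by rintro rfl; simp at hx
  have hx3 : x ^ 3 = 1 := by linear_combination (x - 1) * hx
  have hx1 : x ≠ 1 := by
    rintro rfl
    apply one_ne_zero (α := GaloisField 2 s)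
    linear_combination hx - h2
  have ho : orderOf x = 3 := orderOf_eq_prime hx3 hx1
  have hdvd : orderOf x ∣ Fintype.card (GaloisField 2 s) - 1 :=
    orderOf_dvd_of_pow_eq_one (FiniteField.pow_card_sub_one_eq_one x hx0)
  have hcard : Fintype.card (GaloisField 2 s) = 2 ^ s := by
    rw [← Nat.card_eq_fintype_card]; exact GaloisField.card 2 s hs.ne'
  rw [ho, hcard] at hdvd
  have hmod : 2 ^ s % 3 = 2 := by
    obtain ⟨m, rfl⟩ := hodd
    rw [pow_add, pow_mul, Nat.mul_mod, Nat.pow_mod]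
    norm_num
  have h1 : 1 ≤ 2 ^ s := Nat.one_le_two_pow
  omega


private lemma xor_of_sum (s : ℕ) (hs : 0 < s) (hodd : Odd s) (a b : GaloisField 2 s)
    (hab : ¬ ∃ r : GaloisField 2 s, r ^ 2 + r = a + b) :
    Xor' (∃ r : GaloisField 2 s, r ^ 2 + r + a = 0)
      (∃ r : GaloisField 2 s, r ^ 2 + r + b = 0) := by
  have h2 : (2 : GaloisField 2 s) = 0 := by
    have := CharP.cast_eq_zero (GaloisField 2 s) 2; exact_mod_cast this
  let φ : GaloisField 2 s →+ GaloisField 2 s :=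
    { toFun := fun r => r ^ 2 + r
      map_zero' := by ring_nf
      map_add' := fun r t => by show (r+t)^2+(r+t) = (r^2+r)+(t^2+t); linear_combination (r * t) * h2 }
  have hφ : ∀ r, φ r = r ^ 2 + r := fun r => rfl
  set H : AddSubgroup (GaloisField 2 s) := φ.range with hH
  have hsolv : ∀ c : GaloisField 2 s, (∃ r : GaloisField 2 s, r ^ 2 + r + c = 0) ↔ c ∈ H := by
    intro c
    constructor
    · rintro ⟨r, hr⟩; exact ⟨r, by rw [hφ]; linear_combination hr - c * h2⟩
    · rintro ⟨r, hr⟩; rw [hφ] at hr; exact ⟨r, by linear_combination hr + c * h2⟩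
  have hker : (φ.ker : Set (GaloisField 2 s)) = {0, 1} := by
    ext r
    simp only [SetLike.mem_coe, AddMonoidHom.mem_ker, Set.mem_insert_iff,
      Set.mem_singleton_iff, hφ]
    constructor
    · intro hr
      have : r * (r + 1) = 0 := by linear_combination hr
      rcases mul_eq_zero.mp this with h | h
      · exact Or.inl h
      · right; linear_combination h - h2
    · rintro (rfl | rfl)
      · ring_nf
      · linear_combination h2
  have hkcard : Nat.card φ.ker = 2 := by
    rw [← SetLike.coe_sort_coe, hker, Nat.card_coe_set_eq, Set.ncard_pair zero_ne_one]
  have hrange : Nat.card (GaloisField 2 s ⧸ φ.ker) = Nat.card H :=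
    Nat.card_congr (QuotientAddGroup.quotientKerEquivRange φ).toEquiv
  have c1 : Nat.card (GaloisField 2 s) = Nat.card (GaloisField 2 s ⧸ φ.ker) * Nat.card φ.ker :=
    AddSubgroup.card_eq_card_quotient_mul_card_addSubgroup φ.ker
  have c2 : Nat.card (GaloisField 2 s) = Nat.card (GaloisField 2 s ⧸ H) * Nat.card H :=
    AddSubgroup.card_eq_card_quotient_mul_card_addSubgroup H
  have hHpos : 0 < Nat.card H := Nat.card_pos
  have hQ2 : Nat.card (GaloisField 2 s ⧸ H) = 2 := by
    have : Nat.card (GaloisField 2 s ⧸ H) * Nat.card H = 2 * Nat.card H := by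
      rw [← c2, c1, hkcard, hrange]; ring
    exact Nat.eq_of_mul_eq_mul_right hHpos this
  have key : a ∉ H → b ∉ H → a + b ∈ H := by
    intro ha hb
    obtain ⟨x, y, hxy, hU⟩ := Nat.card_eq_two_iff.mp hQ2
    have hma : (QuotientAddGroup.mk a : GaloisField 2 s ⧸ H) ≠ 0 := by
      simpa [QuotientAddGroup.eq_zero_iff] using ha
    have hmb : (QuotientAddGroup.mk b : GaloisField 2 s ⧸ H) ≠ 0 := by
      simpa [QuotientAddGroup.eq_zero_iff] using hb
    have main : ∀ x y : GaloisField 2 s ⧸ H, x = 0 → x ≠ y →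
        ({x, y} : Set (GaloisField 2 s ⧸ H)) = Set.univ → a + b ∈ H := by
      rintro x y rfl hxy hU
      have ha' : (QuotientAddGroup.mk a : GaloisField 2 s ⧸ H) = y := by
        have h := hU ▸ Set.mem_univ (QuotientAddGroup.mk a (s := H))
        rcases h with h | h
        · exact absurd h hma
        · exact h
      have hb' : (QuotientAddGroup.mk b : GaloisField 2 s ⧸ H) = y := by
        have h := hU ▸ Set.mem_univ (QuotientAddGroup.mk b (s := H))
        rcases h with h | h
        · exact absurd h hmb
        · exact h
      have hyy : y + y = 0 := by
        have h := hU ▸ Set.mem_univ (y + y)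
        rcases h with h | h
        · exact h
        · rw [Set.mem_singleton_iff, add_eq_right] at h
          exact absurd h.symm hxy
      rw [← QuotientAddGroup.eq_zero_iff]
      show ((a + b : GaloisField 2 s) : GaloisField 2 s ⧸ H) = 0
      rw [QuotientAddGroup.mk_add, ha', hb', hyy]
    have h0 : (0 : GaloisField 2 s ⧸ H) ∈ ({x, y} : Set (GaloisField 2 s ⧸ H)) :=
      hU ▸ Set.mem_univ _
    rcases h0 with h | h
    · exact main x y h.symm hxy hU
    · exact main y x h.symm (Ne.symm hxy) (by rw [Set.pair_comm]; exact hU)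
  have hab' : a + b ∉ H := by
    intro hmem
    obtain ⟨r, hr⟩ := hmem
    exact hab ⟨r, by rw [hφ] at hr; exact hr⟩
  by_cases ha : a ∈ H
  · left
    exact ⟨(hsolv a).mpr ha, fun hb => hab' (H.add_mem ha ((hsolv b).mp hb))⟩
  · right
    refine ⟨(hsolv b).mpr ?_, fun hsa => ha ((hsolv a).mp hsa)⟩
    by_contra hb
    exact hab' (key ha hb)

/-- For `s` odd and `θ ∈ GF(2^s)` a root of `T^2 + T + β/(β^2+β+1)` for some `β`,
exactly one of `T^2 + T + θ/(θ^2+θ+1)` and `T^2 + T + (θ+1)/(θ^2+θ+1)` has a root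
in `GF(2^s)`. -/
theorem stmt_5 (s : ℕ) (hs : 0 < s) (hodd : Odd s) (θ β : GaloisField 2 s)
    (h : θ ^ 2 + θ + β / (β ^ 2 + β + 1) = 0) :
    Xor' (∃ r : GaloisField 2 s, r ^ 2 + r + θ / (θ ^ 2 + θ + 1) = 0)
      (∃ r : GaloisField 2 s, r ^ 2 + r + (θ + 1) / (θ ^ 2 + θ + 1) = 0) := by
  have h2 : (2 : GaloisField 2 s) = 0 := by
    have := CharP.cast_eq_zero (GaloisField 2 s) 2; exact_mod_cast this
  have hθ1 : θ ^ 2 + θ + 1 ≠ 0 := fun hx => no_cube_root s hs hodd θ hx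
  have hβ1 : β ^ 2 + β + 1 ≠ 0 := fun hx => no_cube_root s hs hodd β hx
  have hβ : β + 1 ≠ 0 := by
    intro hb
    have hβeq : β = 1 := by linear_combination hb - h2
    apply hθ1
    rw [hβeq] at h
    have h3 : (1 : GaloisField 2 s) ^ 2 + 1 + 1 = 1 := by linear_combination h2
    rw [h3, div_one] at h
    exact h
  have hA : (θ ^ 2 + θ) * (β ^ 2 + β + 1) + β = 0 := by
    have e : β / (β ^ 2 + β + 1) * (β ^ 2 + β + 1) = β := div_mul_cancel₀ β hβ1
    linear_combination (β ^ 2 + β + 1) * h - e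
  apply xor_of_sum s hs hodd
  rintro ⟨r, hr⟩
  have hE1 : r ^ 2 + r = 1 / (θ ^ 2 + θ + 1) := by
    rw [← add_div] at hr
    have hθsum : θ + (θ + 1) = 1 := by linear_combination θ * h2
    rw [hθsum] at hr
    exact hr
  have hE2 : 1 / (θ ^ 2 + θ + 1) = 1 + ((1 / (β + 1)) ^ 2 + 1 / (β + 1)) := by
    field_simp
    rw [div_eq_iff (by convert hθ1 using 1; ring)]
    linear_combination -hA + (β - (β + 1) * (θ ^ 2 + θ + 1)) * h2
  apply no_cube_root s hs hodd (r + 1 / (β + 1))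
  linear_combination hE1 + hE2 + (1 + (1/(β+1))^2 + 1/(β+1) + r * (1/(β+1))) * h2
end

section
/- Let F be a field of characteristic 2 with x, y ∈ F satisfying y^2 + y = x/(x^2+x+1), x ≠ 1, and x^2 + x + 1 ≠ 0. Then 1/(y^2+y+1) + 1/(x+1)^2 + 1/(x+1) = 1. -/
/-- Identity (4.6): in char 2, with `y^2+y = x/(x^2+x+1)`, `x ≠ 1`, `x^2+x+1 ≠ 0`:
`1/(y^2+y+1) + 1/(x+1)^2 + 1/(x+1) = 1`. -/
theorem stmt_11 (F : Type*) [Field F] (hF : CharP F 2) (x y : F)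
    (h : y ^ 2 + y = x / (x ^ 2 + x + 1)) (hx1 : x ≠ 1) (hx : x ^ 2 + x + 1 ≠ 0) :
    1 / (y ^ 2 + y + 1) + 1 / (x + 1) ^ 2 + 1 / (x + 1) = 1 := by
  have h2 : (2 : F) = 0 := by
    haveI := hF; exact_mod_cast CharP.cast_eq_zero F 2
  have hx1' : x + 1 ≠ 0 := by
    intro hc
    exact hx1 (by linear_combination hc - h2)
  have h' : (y ^ 2 + y) * (x ^ 2 + x + 1) = x := by
    rw [eq_div_iff hx] at h
    linear_combination h
  have key : (y ^ 2 + y + 1) * (x ^ 2 + x + 1) = (x + 1) ^ 2 := by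
    linear_combination h'
  have hy : y ^ 2 + y + 1 ≠ 0 := by
    intro hc
    apply hx1'
    have : (x + 1) ^ 2 = 0 := by rw [← key, hc, zero_mul]
    exact pow_eq_zero_iff (by norm_num) |>.mp this
  have hinv : 1 / (y ^ 2 + y + 1) = (x ^ 2 + x + 1) / (x + 1) ^ 2 := by
    rw [eq_div_iff (pow_ne_zero 2 hx1'), one_div, inv_mul_eq_div,
      div_eq_iff hy]
    linear_combination key + (x - x*y - x*y^2 - x^2*y - x^2*y^2 - y - y^2) * h2
  rw [hinv]
  field_simp
  linear_combination h2
end
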